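/- Let p be an odd prime and P a finite noncyclic p-group with cyclic center. Then P has a normal elementary abelian subgroup N of order p², and [P,N] = Ω₁(Z(P)). -/

import Mathlib

open Subgroup
open scoped commutatorElement
open scoped IsMulCommutative

section Aux

variable {G : Type*} [Group G]

lemma aux_central_pow (c : G) (hc : ∀ z, c * z = z * c) (m : ℕ) (z : G) :
    c ^ m * z = z * c ^ m := by
  induction m with
  | zero => simp
  | succ m ihm =>
    calc c ^ (m+1) * z = c * (c ^ m * z) := by rw [pow_succ']; group
    _ = c * (z * c ^ m) := by rw [ihm]
    _ = (c * z) * c ^ m := by group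
    _ = (z * c) * c ^ m := by rw [hc]
    _ = z * c ^ (m+1) := by rw [pow_succ']; group

lemma aux_pow_comm (a b c : G) (hc : ∀ z, c * z = z * c) (h : b * a = a * b * c) (n : ℕ) :
    b ^ n * a = a * b ^ n * c ^ n := by
  induction n with
  | zero => simp
  | succ n ih =>
    calc b ^ (n+1) * a = b * (b ^ n * a) := by rw [pow_succ']; group
    _ = b * (a * b ^ n * c ^ n) := by rw [ih]
    _ = (b * a) * b ^ n * c ^ n := by group
    _ = (a * b * c) * b ^ n * c ^ n := by rw [h]
    _ = a * b * (c * b ^ n) * c ^ n := by group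
    _ = a * b * (b ^ n * c) * c ^ n := by rw [hc]
    _ = a * (b * b ^ n) * (c * c ^ n) := by group
    _ = a * b ^ (n+1) * c ^ (n+1) := by rw [← pow_succ', ← pow_succ']

lemma aux_mul_pow (a b c : G) (hc : ∀ z, c * z = z * c) (h : b * a = a * b * c) (n : ℕ) :
    (a * b) ^ n = a ^ n * b ^ n * c ^ (n.choose 2) := by
  induction n with
  | zero => simp
  | succ n ih =>
    have hch : (n+1).choose 2 = n.choose 2 + n := by
      rw [Nat.choose_succ_succ, Nat.choose_one_right, Nat.add_comm]
    calc (a * b) ^ (n+1) = (a * b) ^ n * (a * b) := pow_succ _ _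
    _ = a ^ n * b ^ n * c ^ (n.choose 2) * (a * b) := by rw [ih]
    _ = a ^ n * b ^ n * (c ^ (n.choose 2) * a) * b := by group
    _ = a ^ n * b ^ n * (a * c ^ (n.choose 2)) * b := by rw [aux_central_pow c hc]
    _ = a ^ n * (b ^ n * a) * (c ^ (n.choose 2) * b) := by group
    _ = a ^ n * (a * b ^ n * c ^ n) * (b * c ^ (n.choose 2)) := by
        rw [aux_pow_comm a b c hc h, aux_central_pow c hc]
    _ = a ^ (n+1) * b ^ n * ((c ^ n * b) * c ^ (n.choose 2)) := by rw [pow_succ]; group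
    _ = a ^ (n+1) * b ^ n * ((b * c ^ n) * c ^ (n.choose 2)) := by rw [aux_central_pow c hc]
    _ = a ^ (n+1) * b ^ (n+1) * (c ^ n * c ^ (n.choose 2)) := by rw [pow_succ]; group
    _ = a ^ (n+1) * b ^ (n+1) * c ^ ((n+1).choose 2) := by
        rw [hch, Nat.add_comm (n.choose 2) n, pow_add]; group

end Aux

section Build

variable {G : Type*} [Group G]

lemma aux_pow_mod {p : ℕ} (t : G) (htp : t ^ p = 1) (i : ℕ) : t ^ i = t ^ (i % p) := by
  conv_lhs => rw [← Nat.div_add_mod i p]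
  rw [pow_add, pow_mul, htp, one_pow, one_mul]

lemma aux_mem_of_pow_mem {p : ℕ} (hp : p.Prime) (W : Subgroup G) (t : G) (htp : t ^ p = 1)
    {m : ℕ} (hm : ¬ p ∣ m) (h : t ^ m ∈ W) : t ∈ W := by
  have hcop : Nat.Coprime m p := Nat.coprime_comm.mp ((Nat.Prime.coprime_iff_not_dvd hp).mpr hm)
  obtain ⟨u, -, hu⟩ := Nat.exists_mul_mod_eq_one_of_coprime hcop hp.one_lt
  have : t = (t ^ m) ^ u := by
    rw [← pow_mul, aux_pow_mod t htp (m * u), hu, pow_one]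
  rw [this]
  exact pow_mem h u

lemma aux_comm_mul (g a b : G) (hb : ∀ z, ⁅g, b⁆ * z = z * ⁅g, b⁆) :
    ⁅g, a * b⁆ = ⁅g, a⁆ * ⁅g, b⁆ := by
  calc ⁅g, a * b⁆ = g * a * g⁻¹ * (⁅g, b⁆ * a⁻¹) := by
        simp only [commutatorElement_def]; group
  _ = g * a * g⁻¹ * (a⁻¹ * ⁅g, b⁆) := by rw [hb a⁻¹]
  _ = ⁅g, a⁆ * ⁅g, b⁆ := by simp only [commutatorElement_def]; group

lemma aux_comm_central (g w : G) (hw : ∀ z, w * z = z * w) : ⁅g, w⁆ = 1 := by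
  rw [commutatorElement_def, ← hw g]
  group

lemma aux_comm_pow_mem (W : Subgroup G) (hWc : ∀ w ∈ W, ∀ z : G, w * z = z * w)
    (g t : G) (hgt : ⁅g, t⁆ ∈ W) (j : ℕ) : ⁅g, t ^ j⁆ ∈ W := by
  induction j with
  | zero => simpa using W.one_mem
  | succ j ih =>
    rw [pow_succ, aux_comm_mul g (t ^ j) t (hWc _ hgt)]
    exact W.mul_mem ih hgt

lemma aux_pow_inv {p : ℕ} (hp : 0 < p) (t : G) (ht : t ^ p = 1) (j : ℕ) :
    (t ^ j)⁻¹ = t ^ (j * (p - 1)) := by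
  obtain ⟨k, rfl⟩ : ∃ k, p = k + 1 := ⟨p - 1, (Nat.succ_pred_eq_of_pos hp).symm⟩
  rw [inv_eq_iff_mul_eq_one, ← pow_add]
  have h : j + j * (k + 1 - 1) = j * (k + 1) := by simp [Nat.add_sub_cancel]; ring
  rw [h, Nat.mul_comm, pow_mul, ht, one_pow]

lemma build {p : ℕ} (hp : p.Prime) (W : Subgroup G)
    (hWcard : Nat.card W = p)
    (hWc : ∀ w ∈ W, ∀ z : G, w * z = z * w)
    (hWe : ∀ w ∈ W, w ^ p = 1)
    (t : G) (ht : t ^ p = 1) (htW : t ∉ W)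
    (hconj : ∀ g : G, ⁅g, t⁆ ∈ W) :
    ∃ N : Subgroup G, N.Normal ∧ Nat.card N = p ^ 2 ∧ (∀ x ∈ N, x ^ p = 1) ∧
      (∀ a ∈ N, ∀ b ∈ N, a * b = b * a) ∧ W ≤ N ∧ t ∈ N ∧
      (∀ g : G, ∀ n ∈ N, ⁅g, n⁆ ∈ W) := by
  have hpinst : Fact p.Prime := ⟨hp⟩
  have hNZ : NeZero p := ⟨hp.pos.ne'⟩
  set N : Subgroup G :=
    { carrier := {z : G | ∃ w ∈ W, ∃ j : ℕ, z = w * t ^ j}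
      one_mem' := ⟨1, W.one_mem, 0, by simp⟩
      mul_mem' := by
        rintro a b ⟨w, hw, i, rfl⟩ ⟨w', hw', j, rfl⟩
        refine ⟨w * w', W.mul_mem hw hw', i + j, ?_⟩
        calc w * t ^ i * (w' * t ^ j) = w * (t ^ i * w') * t ^ j := by group
        _ = w * (w' * t ^ i) * t ^ j := by rw [hWc w' hw']
        _ = w * w' * t ^ (i + j) := by rw [pow_add]; group
      inv_mem' := by
        rintro a ⟨w, hw, j, rfl⟩
        refine ⟨w⁻¹, W.inv_mem hw, j * (p - 1), ?_⟩
        rw [mul_inv_rev, aux_pow_inv hp.pos t ht j, ← hWc w⁻¹ (W.inv_mem hw)] } with hN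
  have memN : ∀ z : G, z ∈ N ↔ ∃ w ∈ W, ∃ j : ℕ, z = w * t ^ j := fun z => Iff.rfl
  have hWN : W ≤ N := fun w hw => ⟨w, hw, 0, by simp⟩
  have htN : t ∈ N := ⟨1, W.one_mem, 1, by simp⟩
  -- commutator property
  have hcommW : ∀ g : G, ∀ n ∈ N, ⁅g, n⁆ ∈ W := by
    rintro g n ⟨w, hw, j, rfl⟩
    have h1 : ⁅g, t ^ j⁆ ∈ W := aux_comm_pow_mem W hWc g t (hconj g) j
    rw [aux_comm_mul g w (t ^ j) (hWc _ h1), aux_comm_central g w (hWc w hw)]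
    rw [one_mul]
    exact h1
  -- normality
  have hnormal : N.Normal := by
    constructor
    rintro n ⟨w, hw, j, rfl⟩ g
    have hc : ⁅g, t⁆ * t = g * t * g⁻¹ := by group
    refine ⟨w * ⁅g, t⁆ ^ j, W.mul_mem hw (W.pow_mem (hconj g) j), j, ?_⟩
    have hcomm : Commute ⁅g, t⁆ t := (hWc _ (hconj g) t)
    calc g * (w * t ^ j) * g⁻¹ = (g * w) * (t ^ j * g⁻¹) := by group
    _ = (w * g) * (t ^ j * g⁻¹) := by rw [← hWc w hw g]
    _ = w * (g * t ^ j * g⁻¹) := by group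
    _ = w * (g * t * g⁻¹) ^ j := by rw [conj_pow]
    _ = w * (⁅g, t⁆ * t) ^ j := by rw [hc]
    _ = w * (⁅g, t⁆ ^ j * t ^ j) := by rw [hcomm.mul_pow]
    _ = w * ⁅g, t⁆ ^ j * t ^ j := by group
  -- cardinality
  have hcard : Nat.card N = p ^ 2 := by
    have hbij : Function.Bijective (fun x : ↥W × ZMod p =>
        (⟨(x.1 : G) * t ^ (x.2.val), ⟨x.1, x.1.2, x.2.val, rfl⟩⟩ : ↥N)) := by
      constructor
      · rintro ⟨w, i⟩ ⟨w', j⟩ hEq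
        have hEq' : (w : G) * t ^ i.val = (w' : G) * t ^ j.val := congrArg Subtype.val hEq
        have hiv : i.val = j.val := by
          by_contra hne
          have hmW : t ^ (i.val + j.val * (p - 1)) ∈ W := by
            have h3 : t ^ (i.val + j.val * (p - 1)) = (w : G)⁻¹ * w' := by
              calc t ^ (i.val + j.val * (p - 1))
                  = t ^ i.val * (t ^ j.val)⁻¹ := by
                    rw [pow_add, aux_pow_inv hp.pos t ht]
              _ = (w : G)⁻¹ * ((w : G) * t ^ i.val) * (t ^ j.val)⁻¹ := by group
              _ = (w : G)⁻¹ * ((w' : G) * t ^ j.val) * (t ^ j.val)⁻¹ := by rw [hEq']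
              _ = (w : G)⁻¹ * w' := by group
            rw [h3]
            exact W.mul_mem (W.inv_mem w.2) w'.2
          have hnd : ¬ p ∣ (i.val + j.val * (p - 1)) := by
            intro hdvd
            apply hne
            have hmod : (i.val + j.val * (p - 1)) % p = 0 :=
              (Nat.mod_eq_zero_of_dvd hdvd)
            have h4 : i.val + j.val * (p - 1) + j.val = i.val + j.val * p := by
              obtain ⟨k, rfl⟩ : ∃ k, p = k + 1 :=
                ⟨p - 1, (Nat.succ_pred_eq_of_pos hp.pos).symm⟩
              simp [Nat.add_sub_cancel]; ring
            have key : i.val % p = j.val % p := by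
              calc i.val % p = (i.val + j.val * p) % p :=
                    (Nat.add_mul_mod_self_right _ _ _).symm
              _ = (i.val + j.val * (p - 1) + j.val) % p := by rw [h4]
              _ = ((i.val + j.val * (p - 1)) % p + j.val % p) % p := by rw [Nat.add_mod]
              _ = j.val % p := by rw [hmod, Nat.zero_add, Nat.mod_mod_of_dvd _ dvd_rfl]
            rwa [Nat.mod_eq_of_lt (ZMod.val_lt i), Nat.mod_eq_of_lt (ZMod.val_lt j)] at key
          exact htW (aux_mem_of_pow_mem hp W t ht hnd hmW)
        have : (w : G) = w' := by
          have := hEq'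
          rw [hiv] at this
          exact mul_right_cancel this
        have hww : w = w' := Subtype.ext this
        have hij : i = j := ZMod.val_injective p hiv
        rw [hww, hij]
      · rintro ⟨z, w, hw, j, rfl⟩
        refine ⟨⟨⟨w, hw⟩, (j : ZMod p)⟩, ?_⟩
        apply Subtype.ext
        show w * t ^ ((j : ZMod p)).val = w * t ^ j
        rw [ZMod.val_natCast, ← aux_pow_mod t ht]
    have := Nat.card_eq_of_bijective _ hbij
    rw [Nat.card_prod, Nat.card_zmod, hWcard, ← sq] at this
    exact this.symm
  -- exponent
  have hexp : ∀ x ∈ N, x ^ p = 1 := by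
    rintro x ⟨w, hw, j, rfl⟩
    have hcomm : Commute w (t ^ j) := hWc w hw (t ^ j)
    rw [hcomm.mul_pow, hWe w hw, one_mul, ← pow_mul, mul_comm j p, pow_mul, ht, one_pow]
  -- commutativity
  have hcm : ∀ a ∈ N, ∀ b ∈ N, a * b = b * a := by
    rintro a ⟨w, hw, i, rfl⟩ b ⟨w', hw', j, rfl⟩
    have e1 : w * t ^ i * (w' * t ^ j) = (w * w') * t ^ (i + j) := by
      calc w * t ^ i * (w' * t ^ j) = w * (t ^ i * w') * t ^ j := by group
      _ = w * (w' * t ^ i) * t ^ j := by rw [← hWc w' hw' (t ^ i)]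
      _ = (w * w') * t ^ (i + j) := by rw [pow_add]; group
    have e2 : w' * t ^ j * (w * t ^ i) = (w * w') * t ^ (i + j) := by
      calc w' * t ^ j * (w * t ^ i) = w' * (t ^ j * w) * t ^ i := by group
      _ = w' * (w * t ^ j) * t ^ i := by rw [← hWc w hw (t ^ j)]
      _ = (w' * w) * t ^ (j + i) := by rw [pow_add]; group
      _ = (w * w') * t ^ (i + j) := by rw [← hWc w hw w', Nat.add_comm]
    rw [e1, e2]
  exact ⟨N, hnormal, hcard, hexp, hcm, hWN, htN, hcommW⟩

end Build

section Cyclic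

lemma cyclic_crit {p : ℕ} (hp : p.Prime) {A : Type*} [CommGroup A] [Finite A]
    (hA : IsPGroup p A) (a : A) (hap : a ^ p = 1)
    (hall : ∀ b : A, b ^ p = 1 → b ∈ Subgroup.zpowers a) : IsCyclic A := by
  classical
  letI := Fintype.ofFinite A
  apply isCyclic_of_card_pow_eq_one_le
  have hker : ∀ j : ℕ,
      Nat.card ((powMonoidHom (p ^ j) : A →* A).ker) =
        (Finset.univ.filter fun x : A => x ^ (p ^ j) = 1).card := by
    intro j
    rw [Nat.card_eq_fintype_card, ← Fintype.card_subtype]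
    apply Fintype.card_congr
    apply Equiv.subtypeEquivRight
    intro x
    simp [MonoidHom.mem_ker, powMonoidHom_apply]
  have hstep : ∀ k : ℕ,
      (Finset.univ.filter fun x : A => x ^ (p ^ k) = 1).card ≤ p ^ k := by
    intro k
    induction k with
    | zero =>
      have : (Finset.univ.filter fun x : A => x ^ (p ^ 0) = 1) = {1} := by
        ext x; simp
      rw [this]; simp
    | succ k ih =>
      set H : Subgroup A := (powMonoidHom (p ^ (k+1)) : A →* A).ker with hH
      set f : ↥H →* A := (powMonoidHom (p ^ k) : A →* A).comp H.subtype with hf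
      have hcard : Nat.card ↥H = Nat.card (↥H ⧸ f.ker) * Nat.card f.ker :=
        Subgroup.card_eq_card_quotient_mul_card_subgroup f.ker
      have hquot : Nat.card (↥H ⧸ f.ker) = Nat.card f.range :=
        Nat.card_congr (QuotientGroup.quotientKerEquivRange f).toEquiv
      have hrange : Nat.card f.range ≤ p := by
        have hle : f.range ≤ Subgroup.zpowers a := by
          rintro y ⟨x, rfl⟩
          apply hall
          have hx : (x : A) ^ (p ^ (k+1)) = 1 := by
            have hmem : (x : A) ∈ (powMonoidHom (p ^ (k+1)) : A →* A).ker := x.2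
            rwa [MonoidHom.mem_ker, powMonoidHom_apply] at hmem
          show (f x) ^ p = 1
          rw [hf]
          simp only [MonoidHom.comp_apply, powMonoidHom_apply, Subgroup.coe_subtype]
          rw [← pow_mul, ← pow_succ]
          exact hx
        calc Nat.card f.range ≤ Nat.card (Subgroup.zpowers a) :=
              Subgroup.card_le_of_le hle
        _ = orderOf a := Nat.card_zpowers a
        _ ≤ p := Nat.le_of_dvd hp.pos (orderOf_dvd_of_pow_eq_one hap)
      have hkerle : Nat.card f.ker ≤
          (Finset.univ.filter fun x : A => x ^ (p ^ k) = 1).card := by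
        rw [← hker k]
        have hmm : ∀ y : f.ker, ((y : ↥H) : A) ∈ (powMonoidHom (p ^ k) : A →* A).ker := by
          intro y
          have h2 : f (y : ↥H) = 1 := y.2
          have h3 : ((y : ↥H) : A) ^ (p ^ k) = 1 := h2
          rw [MonoidHom.mem_ker, powMonoidHom_apply]
          exact h3
        apply Nat.card_le_card_of_injective
          (fun y : f.ker =>
            (⟨((y : ↥H) : A), hmm y⟩ : ((powMonoidHom (p ^ k) : A →* A).ker)))
        intro y z h
        have : ((y : ↥H) : A) = ((z : ↥H) : A) :=
          congrArg (fun w : ((powMonoidHom (p ^ k) : A →* A).ker) => (w : A)) h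
        exact Subtype.ext (Subtype.ext this)
      calc (Finset.univ.filter fun x : A => x ^ (p ^ (k+1)) = 1).card
          = Nat.card ↥H := (hker (k+1)).symm
      _ = Nat.card (↥H ⧸ f.ker) * Nat.card f.ker := hcard
      _ = Nat.card f.range * Nat.card f.ker := by rw [hquot]
      _ ≤ p * p ^ k := Nat.mul_le_mul hrange (hkerle.trans ih)
      _ = p ^ (k+1) := by rw [pow_succ, Nat.mul_comm]
  intro n hn
  set k := n.factorization p with hk
  have hdvd : p ^ k ∣ n := Nat.ordProj_dvd n p
  have hpkn : p ^ k ≤ n := Nat.le_of_dvd hn hdvd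
  have hsubset : (Finset.univ.filter fun x : A => x ^ n = 1) ⊆
      (Finset.univ.filter fun x : A => x ^ (p ^ k) = 1) := by
    intro x hx
    simp only [Finset.mem_filter, Finset.mem_univ, true_and] at hx ⊢
    have hdn : orderOf x ∣ n := orderOf_dvd_iff_pow_eq_one.mpr hx
    obtain ⟨m, hm⟩ := hA x
    have hdp : orderOf x ∣ p ^ m := orderOf_dvd_iff_pow_eq_one.mpr hm
    obtain ⟨j, hjm, hj⟩ := (Nat.dvd_prime_pow hp).mp hdp
    have hjk : j ≤ k := by
      rw [hk]
      exact (Nat.Prime.pow_dvd_iff_le_factorization hp hn.ne').mp (hj ▸ hdn)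
    apply orderOf_dvd_iff_pow_eq_one.mp
    rw [hj]
    exact pow_dvd_pow p hjk
  calc (Finset.univ.filter fun x : A => x ^ n = 1).card
      ≤ (Finset.univ.filter fun x : A => x ^ (p ^ k) = 1).card :=
        Finset.card_le_card hsubset
  _ ≤ p ^ k := hstep k
  _ ≤ n := hpkn

lemma exists_indep {p : ℕ} (hp : p.Prime) {A : Type*} [CommGroup A] [Finite A]
    (hA : IsPGroup p A) (hnc : ¬ IsCyclic A) :
    ∃ a b : A, a ^ p = 1 ∧ a ≠ 1 ∧ b ^ p = 1 ∧ b ∉ Subgroup.zpowers a := by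
  have hFact : Fact p.Prime := ⟨hp⟩
  have hnt : Nontrivial A := by
    rcases subsingleton_or_nontrivial A with h | h
    · exact absurd isCyclic_of_subsingleton hnc
    · exact h
  have hdvd : p ∣ Nat.card A := by
    obtain ⟨n, hn⟩ := IsPGroup.iff_card.mp hA
    have h1 : 1 < Nat.card A := Finite.one_lt_card
    rcases n with _ | n
    · rw [hn] at h1; simp at h1
    · rw [hn]; exact dvd_pow_self p (Nat.succ_ne_zero n)
  obtain ⟨a, ha⟩ := exists_prime_orderOf_dvd_card' p hdvd
  have hane : a ≠ 1 := by
    intro h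
    rw [h, orderOf_one] at ha
    exact hp.one_lt.ne' ha.symm
  have hapow : a ^ p = 1 := by rw [← ha]; exact pow_orderOf_eq_one a
  by_contra hcon
  push_neg at hcon
  apply hnc
  refine cyclic_crit hp hA a hapow ?_
  intro b hb
  exact hcon a b hapow hane hb

end Cyclic

section Omega

variable (p : ℕ) (G : Type*) [Group G]

def OmegaZ : Subgroup G where
  carrier := {x : G | x ∈ Subgroup.center G ∧ x ^ p = 1}
  one_mem' := ⟨Subgroup.one_mem _, one_pow p⟩
  mul_mem' := by
    rintro a b ⟨haz, hap⟩ ⟨hbz, hbp⟩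
    refine ⟨Subgroup.mul_mem _ haz hbz, ?_⟩
    have hcomm : Commute a b := (Subgroup.mem_center_iff.mp haz b).symm
    rw [hcomm.mul_pow, hap, hbp, one_mul]
  inv_mem' := by
    rintro a ⟨haz, hap⟩
    exact ⟨Subgroup.inv_mem _ haz, by rw [inv_pow, hap, inv_one]⟩

variable {p G}

lemma mem_omegaZ {x : G} : x ∈ OmegaZ p G ↔ x ∈ Subgroup.center G ∧ x ^ p = 1 := Iff.rfl

lemma omegaZ_central {x : G} (hx : x ∈ OmegaZ p G) : ∀ z : G, x * z = z * x :=
  fun z => (Subgroup.mem_center_iff.mp hx.1 z).symm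

lemma omegaZ_exp {x : G} (hx : x ∈ OmegaZ p G) : x ^ p = 1 := hx.2

lemma omegaZ_normal : (OmegaZ p G).Normal := by
  constructor
  intro x hx g
  have : g * x * g⁻¹ = x := by rw [Subgroup.mem_center_iff.mp hx.1 g]; group
  rwa [this]

lemma center_dvd_card {p : ℕ} (hp : p.Prime) [Finite G] (hG : IsPGroup p G)
    [Nontrivial G] : p ∣ Nat.card G := by
  have hFact : Fact p.Prime := ⟨hp⟩
  obtain ⟨n, hn⟩ := IsPGroup.iff_card.mp hG
  have h1 : 1 < Nat.card G := Finite.one_lt_card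
  rcases n with _ | n
  · rw [hn] at h1; simp at h1
  · rw [hn]; exact dvd_pow_self p (Nat.succ_ne_zero n)

lemma omegaZ_card {p : ℕ} (hp : p.Prime) [Finite G] (hG : IsPGroup p G)
    [Nontrivial G] (hcyc : IsCyclic (Subgroup.center G)) :
    Nat.card (OmegaZ p G) = p := by
  classical
  have hFact : Fact p.Prime := ⟨hp⟩
  have hZnt : Nontrivial (Subgroup.center G) := hG.center_nontrivial
  have hZp : IsPGroup p (Subgroup.center G) := hG.to_subgroup _
  have hdvd : p ∣ Nat.card (Subgroup.center G) := center_dvd_card hp hZp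
  obtain ⟨x, hx⟩ := exists_prime_orderOf_dvd_card' p hdvd
  set g : G := (x : G) with hg
  have hordg : orderOf g = p := by
    rw [hg, Subgroup.orderOf_coe, hx]
  have hgmem : g ∈ OmegaZ p G := by
    refine ⟨x.2, ?_⟩
    rw [← hordg]; exact pow_orderOf_eq_one g
  -- lower bound
  have hge : p ≤ Nat.card (OmegaZ p G) := by
    have hle : Subgroup.zpowers g ≤ OmegaZ p G := Subgroup.zpowers_le.mpr hgmem
    calc p = orderOf g := hordg.symm
    _ = Nat.card (Subgroup.zpowers g) := (Nat.card_zpowers g).symm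
    _ ≤ Nat.card (OmegaZ p G) := Subgroup.card_le_of_le hle
  -- upper bound
  have hle : Nat.card (OmegaZ p G) ≤ p := by
    letI : Fintype (Subgroup.center G) := Fintype.ofFinite _
    have hinj : Function.Injective
        (fun m : ↥(OmegaZ p G) => (⟨⟨(m : G), m.2.1⟩, by
          apply Subtype.ext
          rw [SubmonoidClass.coe_pow]
          exact m.2.2⟩ : {y : Subgroup.center G // y ^ p = 1})) := by
      intro m m' h
      have : (m : G) = (m' : G) :=
        congrArg (fun w : {y : Subgroup.center G // y ^ p = 1} => ((w : Subgroup.center G) : G)) h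
      exact Subtype.ext this
    have h1 : Nat.card (OmegaZ p G) ≤ Nat.card {y : Subgroup.center G // y ^ p = 1} :=
      Nat.card_le_card_of_injective _ hinj
    have h2 : Nat.card {y : Subgroup.center G // y ^ p = 1} ≤ p := by
      rw [Nat.card_eq_fintype_card, Fintype.card_subtype]
      exact IsCyclic.card_pow_eq_one_le hp.pos
    exact h1.trans h2
  exact Nat.le_antisymm hle hge

end Omega

section NormalCenter

lemma normal_center_meet {p : ℕ} (hp : p.Prime) {G : Type*} [Group G] [Finite G]
    (hG : IsPGroup p G) (H : Subgroup G) [hN : H.Normal] (hH : H ≠ ⊥) :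
    ∃ h : G, h ∈ H ∧ h ≠ 1 ∧ h ∈ Subgroup.center G := by
  have hFact : Fact p.Prime := ⟨hp⟩
  have hconj : IsPGroup p (ConjAct G) := hG.of_equiv ConjAct.toConjAct
  have hmod := hconj.card_modEq_card_fixedPoints (↥H)
  have hHp : IsPGroup p (↥H) := hG.to_subgroup H
  have hdvdH : p ∣ Nat.card (↥H) := by
    have : Nontrivial (↥H) := (Subgroup.nontrivial_iff_ne_bot H).mpr hH
    exact center_dvd_card hp hHp
  have hdvdF : p ∣ Nat.card (MulAction.fixedPoints (ConjAct G) (↥H)) :=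
    Nat.modEq_zero_iff_dvd.mp (hmod.symm.trans (Nat.modEq_zero_iff_dvd.mpr hdvdH))
  have h1mem : (⟨1, H.one_mem⟩ : ↥H) ∈ MulAction.fixedPoints (ConjAct G) (↥H) := by
    rw [MulAction.mem_fixedPoints]
    intro m
    apply Subtype.ext
    rw [ConjAct.Subgroup.val_conj_smul]
    simp [ConjAct.smul_def]
  haveI : Nonempty (MulAction.fixedPoints (ConjAct G) (↥H)) := ⟨⟨_, h1mem⟩⟩
  have hple : p ≤ Nat.card (MulAction.fixedPoints (ConjAct G) (↥H)) :=
    Nat.le_of_dvd Nat.card_pos hdvdF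
  have hnt : Nontrivial (MulAction.fixedPoints (ConjAct G) (↥H)) :=
    Finite.one_lt_card_iff_nontrivial.mp (lt_of_lt_of_le hp.one_lt hple)
  obtain ⟨y, hy⟩ := exists_ne (⟨⟨1, H.one_mem⟩, h1mem⟩ :
    MulAction.fixedPoints (ConjAct G) (↥H))
  refine ⟨((y : ↥H) : G), (y : ↥H).2, ?_, ?_⟩
  · intro h1
    apply hy
    apply Subtype.ext
    apply Subtype.ext
    exact h1
  · rw [Subgroup.mem_center_iff]
    intro z
    have hfix := y.2
    rw [MulAction.mem_fixedPoints] at hfix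
    have := hfix (ConjAct.toConjAct z)
    have hval : ConjAct.toConjAct z • ((y : ↥H) : G) = ((y : ↥H) : G) := by
      conv_rhs => rw [← this]
      rw [ConjAct.Subgroup.val_conj_smul]
    rw [ConjAct.toConjAct_smul] at hval
    calc z * ((y : ↥H) : G) = z * ((y : ↥H) : G) * z⁻¹ * z := by group
    _ = ((y : ↥H) : G) * z := by rw [hval]

end NormalCenter

section Key

universe u

lemma aux_comm_inv {H : Type*} [Group H] (α β : H) (h : α * β = β * α) :
    β⁻¹ * α⁻¹ * β * α = 1 := by
  have h2 : β⁻¹ * α⁻¹ * β * α = β⁻¹ * α⁻¹ * (β * α) := by group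
  rw [h2, ← h]; group

lemma key {p : ℕ} (hp : p.Prime) (hodd : Odd p) :
    ∀ (n : ℕ) (Q : Type u) [Group Q] [Finite Q], Nat.card Q ≤ n → IsPGroup p Q →
      ¬ IsCyclic Q →
      ∃ N : Subgroup Q, N.Normal ∧ Nat.card N = p ^ 2 ∧ (∀ x ∈ N, x ^ p = 1) ∧
        (∀ a ∈ N, ∀ b ∈ N, a * b = b * a) ∧
        (IsCyclic (Subgroup.center Q) → ⁅(⊤ : Subgroup Q), N⁆ = OmegaZ p Q) := by
  intro n
  induction n with
  | zero =>
    intro Q _ _ hle _ _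
    exact absurd (lt_of_lt_of_le Nat.card_pos hle) (lt_irrefl 0)
  | succ n ih =>
    intro Q _ _ hle hQ hnc
    have hFact : Fact p.Prime := ⟨hp⟩
    have hNTQ : Nontrivial Q := by
      rcases subsingleton_or_nontrivial Q with h | h
      · exact absurd isCyclic_of_subsingleton hnc
      · exact h
    by_cases hcyc : IsCyclic (Subgroup.center Q)
    · -- center is cyclic : main construction
      haveI hΩn : (OmegaZ p Q).Normal := omegaZ_normal
      set Ω : Subgroup Q := OmegaZ p Q with hΩ
      have hΩcard : Nat.card Ω = p := omegaZ_card hp hQ hcyc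
      have hΩcent : ∀ w ∈ Ω, ∀ z : Q, w * z = z * w := fun w hw => omegaZ_central hw
      have hΩexp : ∀ w ∈ Ω, w ^ p = 1 := fun w hw => omegaZ_exp hw
      have hΩle : Ω ≤ Subgroup.center Q := fun x hx => hx.1
      -- the quotient
      set Qb := Q ⧸ Ω with hQb
      have hQbp : IsPGroup p Qb := hQ.to_quotient Ω
      have hncb : ¬ IsCyclic Qb := by
        intro hcb
        apply hnc
        have hker : (QuotientGroup.mk' Ω).ker ≤ Subgroup.center Q := by
          rw [QuotientGroup.ker_mk']
          exact hΩle
        have hcomm : ∀ a b : Q, a * b = b * a :=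
          commutative_of_cyclic_center_quotient (QuotientGroup.mk' Ω) hker
        have hcent : Subgroup.center Q = ⊤ := by
          rw [eq_top_iff]
          intro x _
          rw [Subgroup.mem_center_iff]
          intro g
          exact hcomm g x
        rw [hcent] at hcyc
        exact isCyclic_of_surjective Subgroup.topEquiv.toMonoidHom
          Subgroup.topEquiv.surjective
      -- cardinality of the quotient
      have hcardeq : Nat.card Q = Nat.card Qb * p := by
        rw [Subgroup.card_eq_card_quotient_mul_card_subgroup Ω, hΩcard]
      have hQble : Nat.card Qb ≤ n := by
        have h1 : 0 < Nat.card Qb := Nat.card_pos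
        have h2 : 2 ≤ p := hp.two_le
        have h3 : Nat.card Qb * 2 ≤ Nat.card Qb * p := Nat.mul_le_mul_left _ h2
        omega
      obtain ⟨Nb, hNbn, hNbcard, hNbexp, hNbcomm, -⟩ := ih Qb hQble hQbp hncb
      -- the preimage M of Nb
      set M : Subgroup Q := Nb.comap (QuotientGroup.mk' Ω) with hM
      have hMn : M.Normal := hNbn.comap _
      have hΩM : Ω ≤ M := by
        intro x hx
        rw [hM, Subgroup.mem_comap]
        have : (QuotientGroup.mk' Ω) x = 1 := (QuotientGroup.eq_one_iff x).mpr hx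
        rw [this]
        exact Nb.one_mem
      have hmkmem : ∀ m : Q, m ∈ M → (QuotientGroup.mk' Ω) m ∈ Nb := by
        intro m hm
        rwa [hM, Subgroup.mem_comap] at hm
      -- m ^ p lands in Ω for m in M
      have hMp : ∀ m : Q, m ∈ M → m ^ p ∈ Ω := by
        intro m hm
        have h1 : (QuotientGroup.mk' Ω) (m ^ p) = 1 := by
          rw [map_pow]
          exact hNbexp _ (hmkmem m hm)
        exact (QuotientGroup.eq_one_iff _).mp h1
      -- commutators of M lie in Ω
      have hMc : ∀ a b : Q, a ∈ M → b ∈ M → b⁻¹ * a⁻¹ * b * a ∈ Ω := by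
        intro a b ha hb
        have h1 : (QuotientGroup.mk' Ω) (b⁻¹ * a⁻¹ * b * a) = 1 := by
          rw [map_mul, map_mul, map_mul, map_inv, map_inv]
          exact aux_comm_inv _ _
            (hNbcomm _ (hmkmem a ha) _ (hmkmem b hb))
        exact (QuotientGroup.eq_one_iff _).mp h1
      -- choose 2 trick
      have hchoose : ∀ c : Q, c ∈ Ω → c ^ (p.choose 2) = 1 := by
        intro c hc
        have h2 : 2 ∣ p - 1 := by
          obtain ⟨k, hk⟩ := hodd
          omega
        have h3 : p.choose 2 = p * ((p - 1) / 2) := by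
          rw [Nat.choose_two_right, Nat.mul_div_assoc p h2]
        rw [h3, pow_mul, hΩexp c hc, one_pow]
      -- the p-th power homomorphism on M
      set φ : ↥M →* ↥Ω :=
        { toFun := fun m => ⟨(m : Q) ^ p, hMp _ m.2⟩
          map_one' := by
            apply Subtype.ext
            simp
          map_mul' := by
            intro a b
            apply Subtype.ext
            show ((a : Q) * (b : Q)) ^ p = (a : Q) ^ p * (b : Q) ^ p
            set x : Q := (a : Q)
            set y : Q := (b : Q)
            set c : Q := y⁻¹ * x⁻¹ * y * x with hc
            have hcΩ : c ∈ Ω := hMc x y a.2 b.2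
            have hyx : y * x = x * y * c := by rw [hc]; group
            rw [aux_mul_pow x y c (hΩcent c hcΩ) hyx p, hchoose c hcΩ, mul_one] } with hφ
      -- cardinality of M
      set f : ↥M →* Qb := (QuotientGroup.mk' Ω).comp M.subtype with hf
      have hfrange : f.range = Nb := by
        rw [hf, MonoidHom.range_comp, Subgroup.range_subtype, hM,
          Subgroup.map_comap_eq_self_of_surjective (QuotientGroup.mk'_surjective Ω)]
      have hfker : f.ker = Ω.subgroupOf M := by
        ext y
        rw [MonoidHom.mem_ker, Subgroup.mem_subgroupOf]
        exact QuotientGroup.eq_one_iff (y : Q)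
      have hfkercard : Nat.card f.ker = p := by
        rw [hfker, Nat.card_congr (Subgroup.subgroupOfEquivOfLe hΩM).toEquiv, hΩcard]
      have hMcard : Nat.card ↥M = p ^ 3 := by
        have h1 : Nat.card ↥M = Nat.card (↥M ⧸ f.ker) * Nat.card f.ker :=
          Subgroup.card_eq_card_quotient_mul_card_subgroup f.ker
        have h2 : Nat.card (↥M ⧸ f.ker) = Nat.card f.range :=
          Nat.card_congr (QuotientGroup.quotientKerEquivRange f).toEquiv
        rw [h1, h2, hfrange, hNbcard, hfkercard]
        ring
      -- the kernel of φ is large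
      have hφkercard : p ^ 2 ≤ Nat.card φ.ker := by
        have h1 : Nat.card ↥M = Nat.card (↥M ⧸ φ.ker) * Nat.card φ.ker :=
          Subgroup.card_eq_card_quotient_mul_card_subgroup φ.ker
        have h2 : Nat.card (↥M ⧸ φ.ker) = Nat.card φ.range :=
          Nat.card_congr (QuotientGroup.quotientKerEquivRange φ).toEquiv
        have h3 : Nat.card φ.range ≤ p := by
          calc Nat.card φ.range ≤ Nat.card ↥Ω := Subgroup.card_le_card_group _
          _ = p := hΩcard
        have h4 : Nat.card φ.range * Nat.card φ.ker = p ^ 3 := by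
          rw [← h2, ← h1, hMcard]
        have h5 : p * p ^ 2 ≤ p * Nat.card φ.ker := by
          calc p * p ^ 2 = p ^ 3 := by ring
          _ = Nat.card φ.range * Nat.card φ.ker := h4.symm
          _ ≤ p * Nat.card φ.ker := Nat.mul_le_mul_right _ h3
        exact Nat.le_of_mul_le_mul_left h5 hp.pos
      -- E, the subgroup of elements of M of order dividing p
      set E : Subgroup Q := φ.ker.map M.subtype with hE
      have hEmem : ∀ z : Q, z ∈ E ↔ z ∈ M ∧ z ^ p = 1 := by
        intro z
        constructor
        · rintro ⟨y, hy, rfl⟩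
          refine ⟨y.2, ?_⟩
          have : (φ y : Q) = 1 := by rw [hy]; rfl
          exact this
        · rintro ⟨hzM, hzp⟩
          refine ⟨⟨z, hzM⟩, ?_, rfl⟩
          exact MonoidHom.mem_ker.mpr (Subtype.ext hzp)
      have hEcard : p ^ 2 ≤ Nat.card E := by
        rw [hE, ← Nat.card_congr (Subgroup.equivMapOfInjective φ.ker M.subtype
          (Subgroup.subtype_injective M)).toEquiv]
        exact hφkercard
      have hΩE : Ω ≤ E := by
        intro w hw
        rw [hEmem]
        exact ⟨hΩM hw, hΩexp w hw⟩
      have hEn : E.Normal := by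
        constructor
        intro e he g
        rw [hEmem] at he ⊢
        refine ⟨hMn.conj_mem e he.1 g, ?_⟩
        rw [conj_pow, he.2, mul_one, mul_inv_cancel]
      -- pick an element of E, not in Ω, whose image is central in the quotient
      haveI hEnI : E.Normal := hEn
      set Eb : Subgroup Qb := E.map (QuotientGroup.mk' Ω) with hEb
      haveI hEbn : Eb.Normal := hEn.map _ (QuotientGroup.mk'_surjective Ω)
      have hEbne : Eb ≠ ⊥ := by
        have hex : ∃ e ∈ E, e ∉ Ω := by
          by_contra hcon
          push_neg at hcon
          have : Nat.card E ≤ p := by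
            rw [← hΩcard]
            exact Subgroup.card_le_of_le hcon
          have hplt : p < p ^ 2 := by
            have := hp.two_le
            nlinarith
          omega
        obtain ⟨e, heE, heΩ⟩ := hex
        intro hbot
        have : (QuotientGroup.mk' Ω) e ∈ Eb := ⟨e, heE, rfl⟩
        rw [hbot, Subgroup.mem_bot] at this
        exact heΩ ((QuotientGroup.eq_one_iff e).mp this)
      obtain ⟨hb, hhbEb, hhbne, hhbc⟩ := normal_center_meet hp hQbp Eb hEbne
      obtain ⟨t, htE, htmk⟩ := hhbEb
      have htM : t ∈ M := ((hEmem t).mp htE).1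
      have htp : t ^ p = 1 := ((hEmem t).mp htE).2
      have htΩ : t ∉ Ω := by
        intro h
        apply hhbne
        rw [← htmk]
        exact (QuotientGroup.eq_one_iff t).mpr h
      have hconj : ∀ g : Q, ⁅g, t⁆ ∈ Ω := by
        intro g
        have h0 : (QuotientGroup.mk' Ω) ⁅g, t⁆ =
            ⁅(QuotientGroup.mk' Ω) g, (QuotientGroup.mk' Ω) t⁆ := by
          simp [commutatorElement_def, map_mul, map_inv]
        have h2 : (QuotientGroup.mk' Ω) ⁅g, t⁆ = 1 := by
          rw [h0, htmk, commutatorElement_eq_one_iff_mul_comm]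
          exact (Subgroup.mem_center_iff.mp hhbc _)
        exact (QuotientGroup.eq_one_iff _).mp h2
      -- build the subgroup N
      obtain ⟨N, hNn, hNcard, hNexp, hNcomm, hWN, htN, hcommW⟩ :=
        build hp Ω hΩcard hΩcent hΩexp t htp htΩ hconj
      refine ⟨N, hNn, hNcard, hNexp, hNcomm, fun _ => ?_⟩
      -- the commutator computation
      set K : Subgroup Q := ⁅(⊤ : Subgroup Q), N⁆ with hK
      show K = OmegaZ p Q
      have hKle : K ≤ Ω :=
        Subgroup.commutator_le.mpr (fun g _ n hn => hcommW g n hn)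
      have htnc : t ∉ Subgroup.center Q := by
        intro h
        exact htΩ ⟨h, htp⟩
      have hex : ∃ g : Q, g * t ≠ t * g := by
        by_contra hcon
        push_neg at hcon
        exact htnc (Subgroup.mem_center_iff.mpr hcon)
      obtain ⟨g, hg⟩ := hex
      have hne1 : ⁅g, t⁆ ≠ 1 := by
        rw [Ne, commutatorElement_eq_one_iff_mul_comm]
        exact hg
      have hmemK : ⁅g, t⁆ ∈ K :=
        Subgroup.commutator_mem_commutator (Subgroup.mem_top g) htN
      have hKne : K ≠ ⊥ := by
        intro h
        rw [h, Subgroup.mem_bot] at hmemK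
        exact hne1 hmemK
      have hKdvd : Nat.card K ∣ p := by
        rw [← hΩcard]
        exact Subgroup.card_dvd_of_le hKle
      rcases (Nat.Prime.eq_one_or_self_of_dvd hp _ hKdvd) with h1 | h1
      · rw [Subgroup.card_eq_one] at h1
        exact absurd h1 hKne
      · exact Subgroup.eq_of_le_of_card_ge hKle (by rw [hΩcard, h1])
    · -- center not cyclic : two independent central elements
      have hA : IsPGroup p (Subgroup.center Q) := hQ.to_subgroup _
      obtain ⟨a, b, hap, hane, hbp, hb⟩ := exists_indep hp hA hcyc
      set x : Q := (a : Q) with hx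
      set t : Q := (b : Q) with ht
      have hxc : x ∈ Subgroup.center Q := a.2
      have htc : t ∈ Subgroup.center Q := b.2
      have hxp : x ^ p = 1 := by
        rw [hx, ← Subgroup.coe_pow, hap, OneMemClass.coe_one]
      have htp : t ^ p = 1 := by
        rw [ht, ← Subgroup.coe_pow, hbp, OneMemClass.coe_one]
      have hxne : x ≠ 1 := by
        intro h
        exact hane (Subtype.ext h)
      have hordx : orderOf x = p := orderOf_eq_prime hxp hxne
      set W : Subgroup Q := Subgroup.zpowers x with hW
      have hWcard : Nat.card W = p := by rw [hW, Nat.card_zpowers, hordx]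
      have hWle : W ≤ Subgroup.center Q := Subgroup.zpowers_le.mpr hxc
      have hWc : ∀ w ∈ W, ∀ z : Q, w * z = z * w :=
        fun w hw z => (Subgroup.mem_center_iff.mp (hWle hw) z).symm
      have hWe : ∀ w ∈ W, w ^ p = 1 := by
        intro w hw
        obtain ⟨k, hk⟩ := Subgroup.mem_zpowers_iff.mp hw
        subst hk
        have h1 : ((x ^ k) ^ (p : ℕ) : Q) = (x ^ (p : ℕ)) ^ k := by
          rw [← zpow_natCast (x ^ k), ← zpow_mul, mul_comm, zpow_mul, zpow_natCast]
        rw [h1, hxp, one_zpow]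
      have htW : t ∉ W := by
        intro hmem
        obtain ⟨k, hk⟩ := Subgroup.mem_zpowers_iff.mp hmem
        apply hb
        rw [Subgroup.mem_zpowers_iff]
        refine ⟨k, ?_⟩
        apply Subtype.ext
        rw [Subgroup.coe_zpow]
        exact hk
      have hconj : ∀ g : Q, ⁅g, t⁆ ∈ W := by
        intro g
        have : ⁅g, t⁆ = 1 := by
          rw [commutatorElement_eq_one_iff_mul_comm]
          exact Subgroup.mem_center_iff.mp htc g
        rw [this]
        exact W.one_mem
      obtain ⟨N, hNn, hNcard, hNexp, hNcomm, hWN, htN, hcommW⟩ :=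
        build hp W hWcard hWc hWe t htp htW hconj
      exact ⟨N, hNn, hNcard, hNexp, hNcomm, fun h => absurd h hcyc⟩

end Key

/-- Let `p` be an odd prime and `P` a finite noncyclic `p`-group with cyclic
center. Then `P` has a normal elementary abelian subgroup `N` of order `p²`,
and `[P,N] = Ω₁(Z(P))`. -/
theorem stmt_9 {p : ℕ} (hp : p.Prime) (hodd : Odd p)
    {P : Type*} [Group P] [Finite P] (hP : IsPGroup p P) (hnc : ¬ IsCyclic P)
    (hcyc : IsCyclic (Subgroup.center P)) :
    ∃ N : Subgroup P, N.Normal ∧ Nat.card N = p ^ 2 ∧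
      (∀ x ∈ N, x ^ p = 1) ∧ (∀ a ∈ N, ∀ b ∈ N, a * b = b * a) ∧
      ⁅(⊤ : Subgroup P), N⁆ =
        Subgroup.closure {x : P | x ∈ Subgroup.center P ∧ x ^ p = 1} := by
  obtain ⟨N, h1, h2, h3, h4, h5⟩ := key hp hodd (Nat.card P) P le_rfl hP hnc
  refine ⟨N, h1, h2, h3, h4, ?_⟩
  rw [h5 hcyc, ← Subgroup.closure_eq (OmegaZ p P)]
  rfl
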